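/- For every positive even integer n, the set {1, 2, ..., 3n} can be partitioned into n triples such that each triple sums to either 6n+3 or 3n, and each triple contains exactly one integer from each residue class modulo 3. -/

import Mathlib

def bb (m t : ℕ) : ℕ := if t < m then 3*(m+m) - 6*t - 4 else 6*(m+m) - 6*t - 1

def trip (m t : ℕ) : Finset ℕ := {3*t+1, 3*t+3, bb m t}

lemma mem_trip {m t x : ℕ} : x ∈ trip m t ↔ x = 3*t+1 ∨ x = 3*t+3 ∨ x = bb m t := by
  simp [trip]

lemma bb_spec (m t : ℕ) :
    (t < m ∧ bb m t = 3*(m+m) - 6*t - 4) ∨ (m ≤ t ∧ bb m t = 6*(m+m) - 6*t - 1) := by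
  unfold bb
  split_ifs with h
  · exact Or.inl ⟨h, rfl⟩
  · exact Or.inr ⟨by omega, rfl⟩

lemma cover (m x : ℕ) (hm : 0 < m) (hx : 1 ≤ x) (hx' : x ≤ 3*(m+m)) :
    ∃ t, t < m + m ∧ x ∈ trip m t := by
  rcases (show x % 3 = 0 ∨ x % 3 = 1 ∨ x % 3 = 2 by omega) with h | h | h
  · exact ⟨x/3 - 1, by omega, by rw [mem_trip]; right; left; omega⟩
  · exact ⟨x/3, by omega, by rw [mem_trip]; left; omega⟩
  · rcases Nat.even_or_odd (x/3) with ⟨k, hk⟩ | ⟨k, hk⟩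
    · refine ⟨m - 1 - k, by omega, ?_⟩
      rw [mem_trip]; right; right
      rcases bb_spec m (m - 1 - k) with ⟨h1, h2⟩ | ⟨h1, h2⟩ <;> omega
    · refine ⟨m + m - 1 - k, by omega, ?_⟩
      rw [mem_trip]; right; right
      rcases bb_spec m (m + m - 1 - k) with ⟨h1, h2⟩ | ⟨h1, h2⟩ <;> omega

theorem stmt_0 (n : ℕ) (hn : 0 < n) (he : Even n) :
    ∃ T : Finset (Finset ℕ), T.card = n ∧
      (T : Set (Finset ℕ)).PairwiseDisjoint id ∧
      T.sup id = Finset.Icc 1 (3 * n) ∧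
      ∀ t ∈ T, t.card = 3 ∧ ((∑ x ∈ t, x) = 6 * n + 3 ∨ (∑ x ∈ t, x) = 3 * n) ∧
        ∀ r < 3, ∃! x, x ∈ t ∧ x % 3 = r := by
  obtain ⟨m, rfl⟩ := he
  have hm : 0 < m := by omega
  refine ⟨(Finset.range (m + m)).image (trip m), ?_, ?_, ?_, ?_⟩
  · rw [Finset.card_image_of_injOn, Finset.card_range]
    intro i hi j hj hij
    simp only [Finset.coe_range, Set.mem_Iio] at hi hj
    have h1 : (3*i+1 : ℕ) ∈ trip m j := by rw [← hij, mem_trip]; left; rfl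
    rw [mem_trip] at h1
    rcases bb_spec m j with ⟨ha, hb⟩ | ⟨ha, hb⟩ <;> omega
  · intro s hs t ht hne
    simp only [Finset.coe_image, Set.mem_image, Finset.mem_coe, Finset.mem_range] at hs ht
    obtain ⟨i, hi, rfl⟩ := hs
    obtain ⟨j, hj, rfl⟩ := ht
    have hij : i ≠ j := fun h => hne (by rw [h])
    simp only [id, Finset.disjoint_left]
    intro x hx hx'
    rw [mem_trip] at hx hx'
    rcases bb_spec m i with ⟨ha, hb⟩ | ⟨ha, hb⟩ <;>
      rcases bb_spec m j with ⟨hc, hd⟩ | ⟨hc, hd⟩ <;> omega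
  · ext x
    simp only [Finset.mem_sup, Finset.mem_image, Finset.mem_range, Finset.mem_Icc, id]
    constructor
    · rintro ⟨s, ⟨t, ht, rfl⟩, hx⟩
      rw [mem_trip] at hx
      rcases bb_spec m t with ⟨ha, hb⟩ | ⟨ha, hb⟩ <;> omega
    · rintro ⟨h1, h2⟩
      obtain ⟨t, ht, hx⟩ := cover m x hm h1 (by omega)
      exact ⟨trip m t, ⟨t, ht, rfl⟩, hx⟩
  · rintro s hs
    simp only [Finset.mem_image, Finset.mem_range] at hs
    obtain ⟨t, ht, rfl⟩ := hs
    have hsp := bb_spec m t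
    have hd1 : (3*t+1 : ℕ) ∉ ({3*t+3, bb m t} : Finset ℕ) := by
      simp only [Finset.mem_insert, Finset.mem_singleton]
      rcases hsp with ⟨ha, hb⟩ | ⟨ha, hb⟩ <;> omega
    have hd2 : (3*t+3 : ℕ) ∉ ({bb m t} : Finset ℕ) := by
      simp only [Finset.mem_singleton]
      rcases hsp with ⟨ha, hb⟩ | ⟨ha, hb⟩ <;> omega
    refine ⟨?_, ?_, ?_⟩
    · rw [trip, Finset.card_insert_of_notMem hd1, Finset.card_insert_of_notMem hd2,
        Finset.card_singleton]
    · rw [trip, Finset.sum_insert hd1, Finset.sum_insert hd2, Finset.sum_singleton]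
      rcases hsp with ⟨ha, hb⟩ | ⟨ha, hb⟩
      · right; omega
      · left; omega
    · intro r hr
      interval_cases r
      · refine ⟨3*t+3, ⟨by rw [mem_trip]; right; left; rfl, by omega⟩, ?_⟩
        rintro y ⟨hy, hy3⟩
        rw [mem_trip] at hy
        rcases hsp with ⟨ha, hb⟩ | ⟨ha, hb⟩ <;> omega
      · refine ⟨3*t+1, ⟨by rw [mem_trip]; left; rfl, by omega⟩, ?_⟩
        rintro y ⟨hy, hy3⟩
        rw [mem_trip] at hy
        rcases hsp with ⟨ha, hb⟩ | ⟨ha, hb⟩ <;> omega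
      · refine ⟨bb m t, ⟨by rw [mem_trip]; right; right; rfl, ?_⟩, ?_⟩
        · rcases hsp with ⟨ha, hb⟩ | ⟨ha, hb⟩ <;> omega
        · rintro y ⟨hy, hy3⟩
          rw [mem_trip] at hy
          rcases hsp with ⟨ha, hb⟩ | ⟨ha, hb⟩ <;> omega
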